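/- For r₁, r₂, α₁, α₂ > 0, the Wasserstein distance between Gamma(r₁,α₁) and Gamma(r₂,α₂) is at most |r₁−r₂|/(α₁∨α₂) + (r₁∨r₂)|1/α₁ − 1/α₂|. -/

import Mathlib

open MeasureTheory ProbabilityTheory Real
open MeasureTheory ProbabilityTheory Real Set
open scoped ENNReal NNReal

noncomputable section

/-- `ν` is the size-biased distribution of `μ`: `E[V f(V)] = E[V] · E[f(V^s)]`
for all bounded measurable test functions `f`. -/
def IsSizeBiased (μ ν : Measure ℝ) : Prop :=
  ∀ f : ℝ → ℝ, Measurable f → (∀ x, |f x| ≤ 1) →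
    ∫ x, x * f x ∂μ = (∫ x, x ∂μ) * ∫ x, f x ∂ν

/-- `ν` is the zero-biased distribution of `μ`: `E[(W−μ) f(W)] = σ² · E[f'(W^z)]`
for all differentiable test functions `f` with bounded derivative. -/
def IsZeroBiased (μ ν : Measure ℝ) : Prop :=
  ∀ f : ℝ → ℝ, Differentiable ℝ f → (∀ x, |deriv f x| ≤ 1) →
    ∫ x, (x - ∫ y, y ∂μ) * f x ∂μ
      = (∫ x, (x - ∫ y, y ∂μ) ^ 2 ∂μ) * ∫ x, deriv f x ∂ν

lemma gamma_bridge (a r : ℝ) (ha : 0 < a) (hr : 0 < r) (g : ℝ → ℝ) :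
    ∫ x, g x ∂(gammaMeasure a r) = ∫ x, gammaPDFReal a r x * g x := by
  rw [gammaMeasure]
  have hm : Measurable fun x => (gammaPDFReal a r x).toNNReal :=
    (measurable_gammaPDFReal a r).real_toNNReal
  have : gammaPDF a r = fun x => ((gammaPDFReal a r x).toNNReal : ℝ≥0∞) := rfl
  rw [this, integral_withDensity_eq_integral_smul hm]
  congr 1; ext x
  rw [NNReal.smul_def, Real.coe_toNNReal _ (gammaPDFReal_nonneg ha hr x), smul_eq_mul]

lemma gamma_integrable_iff (a r : ℝ) (ha : 0 < a) (hr : 0 < r) (g : ℝ → ℝ) :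
    Integrable g (gammaMeasure a r) ↔ Integrable (fun x => gammaPDFReal a r x * g x) := by
  have hm : Measurable fun x => (gammaPDFReal a r x).toNNReal :=
    (measurable_gammaPDFReal a r).real_toNNReal
  have h1 : gammaMeasure a r
      = volume.withDensity (fun x => ((gammaPDFReal a r x).toNNReal : ℝ≥0∞)) := rfl
  rw [h1]
  have key := (integrable_withDensity_iff_integrable_smul (μ := volume) hm (g := g)).symm
  have hfun : (fun x => (gammaPDFReal a r x).toNNReal • g x)
      = fun x => gammaPDFReal a r x * g x := by
    funext x
    rw [NNReal.smul_def, Real.coe_toNNReal _ (gammaPDFReal_nonneg ha hr x), smul_eq_mul]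
  rw [hfun] at key; exact key.symm

lemma integrableOn_rpow_exp (a r : ℝ) (ha : 0 < a) (hr : 0 < r) :
    IntegrableOn (fun x : ℝ => x ^ (a - 1) * exp (-(r * x))) (Ioi 0) := by
  have h := integrableOn_rpow_mul_exp_neg_mul_rpow (s := a - 1) (p := 1) (b := r)
    (by linarith) zero_lt_one hr
  apply h.congr_fun ?_ measurableSet_Ioi
  intro x _
  simp only [Real.rpow_one, neg_mul]

lemma integrable_gammaPDFReal_mul (a r : ℝ) (ha : 0 < a) (hr : 0 < r) (c : ℝ) (hc : 0 ≤ c) :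
    Integrable (fun x => gammaPDFReal a r x * x ^ c) := by
  have h0 : IntegrableOn (fun x => gammaPDFReal a r x * x ^ c) (Iio 0) := by
    refine integrableOn_zero.congr_fun (fun x hx => ?_) measurableSet_Iio
    have hx' : x < 0 := hx
    simp [gammaPDFReal, not_le.mpr hx']
  have h1 : IntegrableOn (fun x => gammaPDFReal a r x * x ^ c) (Ici 0) := by
    rw [integrableOn_Ici_iff_integrableOn_Ioi]
    have h := ((integrableOn_rpow_exp (a + c) r (by linarith) hr).const_mul (r ^ a / Gamma a))
    refine IntegrableOn.congr_fun h (fun x hx => ?_) measurableSet_Ioi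
    have hx' : (0:ℝ) < x := hx
    rw [gammaPDFReal, if_pos hx'.le]
    rw [show a + c - 1 = (a - 1) + c by ring, rpow_add hx']
    ring
  have h2 := h0.union h1
  rwa [Iio_union_Ici, integrableOn_univ] at h2

lemma integral_gammaPDFReal_mul (a r : ℝ) (ha : 0 < a) (hr : 0 < r) (c : ℝ) (hc : 0 < c) :
    ∫ x, gammaPDFReal a r x * x ^ c = Gamma (a + c) / Gamma a * (1 / r) ^ c := by
  rw [← setIntegral_eq_integral_of_forall_compl_eq_zero (s := Ioi 0) ?_]
  · have : ∀ x ∈ Ioi (0:ℝ), gammaPDFReal a r x * x ^ c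
        = r ^ a / Gamma a * (x ^ (a + c - 1) * exp (-(r * x))) := by
      intro x hx
      have hx' : (0:ℝ) < x := hx
      rw [gammaPDFReal, if_pos hx'.le, show a + c - 1 = (a - 1) + c by ring, rpow_add hx']
      ring
    rw [setIntegral_congr_fun measurableSet_Ioi this, integral_const_mul,
      integral_rpow_mul_exp_neg_mul_Ioi (by linarith) hr]
    have hra : r ^ (a + c) = r ^ a * r ^ c := rpow_add hr _ _
    rw [div_rpow zero_le_one hr.le, one_rpow, hra, div_rpow zero_le_one hr.le, one_rpow]
    have h1 : r ^ a ≠ 0 := by positivity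
    have h2 : r ^ c ≠ 0 := by positivity
    have h3 : Gamma a ≠ 0 := (Gamma_pos_of_pos ha).ne'
    field_simp
  · intro x hx
    simp only [mem_compl_iff, mem_Ioi, not_lt] at hx
    rcases lt_or_eq_of_le hx with h | h
    · simp [gammaPDFReal, not_le.mpr h]
    · subst h
      rw [zero_rpow hc.ne']
      ring

variable {a r : ℝ}

lemma integrable_gammaPDFReal (ha : 0 < a) (hr : 0 < r) :
    Integrable (gammaPDFReal a r) := by
  have hp : IsProbabilityMeasure (gammaMeasure a r) := isProbabilityMeasure_gammaMeasure ha hr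
  have h := (gamma_integrable_iff a r ha hr (fun _ => (1:ℝ))).mp (integrable_const 1)
  simpa using h

lemma integrable_gammaPDFReal_mul_abs (ha : 0 < a) (hr : 0 < r) :
    Integrable (fun x => gammaPDFReal a r x * |x|) := by
  have h := integrable_gammaPDFReal_mul a r ha hr 1 zero_le_one
  apply h.congr
  filter_upwards with x
  rcases le_or_gt 0 x with hx | hx
  · rw [rpow_one, abs_of_nonneg hx]
  · simp [gammaPDFReal, not_le.mpr hx]

/-- linear growth implies integrability w.r.t. the gamma measure -/
lemma gamma_integrable_of_growth (ha : 0 < a) (hr : 0 < r) {g : ℝ → ℝ} (hgc : Continuous g)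
    {C D : ℝ} (hbound : ∀ x, |g x| ≤ C + D * |x|) :
    Integrable g (gammaMeasure a r) := by
  rw [gamma_integrable_iff a r ha hr]
  have hmaj : Integrable (fun x => gammaPDFReal a r x * (C + D * |x|)) := by
    have h1 := (integrable_gammaPDFReal ha hr).const_mul C
    have h2 := (integrable_gammaPDFReal_mul_abs ha hr).const_mul D
    apply (h1.add h2).congr
    filter_upwards with x
    simp only [Pi.add_apply]
    ring
  refine hmaj.mono' ?_ ?_
  · exact ((measurable_gammaPDFReal a r).mul hgc.measurable).aestronglyMeasurable
  · filter_upwards with x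
    rw [norm_mul, norm_eq_abs, norm_eq_abs, abs_of_nonneg (gammaPDFReal_nonneg ha hr x)]
    exact mul_le_mul_of_nonneg_left (hbound x) (gammaPDFReal_nonneg ha hr x)

lemma gamma_integrable_id (ha : 0 < a) (hr : 0 < r) :
    Integrable (fun x => x) (gammaMeasure a r) :=
  gamma_integrable_of_growth ha hr continuous_id (C := 0) (D := 1) (fun x => by simp)

lemma gamma_mean (ha : 0 < a) (hr : 0 < r) : ∫ x, x ∂(gammaMeasure a r) = a / r := by
  rw [gamma_bridge a r ha hr]
  have h := integral_gammaPDFReal_mul a r ha hr 1 one_pos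
  have hfun : (fun x => gammaPDFReal a r x * x ^ (1:ℝ)) = fun x => gammaPDFReal a r x * x := by
    funext x; rw [rpow_one]
  rw [hfun] at h
  rw [h, Gamma_add_one ha.ne', rpow_one]
  field_simp [(Gamma_pos_of_pos ha).ne']

lemma gamma_mean_abs (ha : 0 < a) (hr : 0 < r) : ∫ x, |x| ∂(gammaMeasure a r) = a / r := by
  rw [gamma_bridge a r ha hr, ← gamma_mean ha hr, gamma_bridge a r ha hr]
  congr 1
  funext x
  rcases le_or_gt 0 x with hx | hx
  · rw [abs_of_nonneg hx]
  · simp [gammaPDFReal, not_le.mpr hx]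

lemma gammaPDFReal_scale (ha : 0 < a) (hr : 0 < r) {c : ℝ} (hc : 0 < c) (x : ℝ) :
    gammaPDFReal a (c * r) x = c * gammaPDFReal a r (c * x) := by
  unfold gammaPDFReal
  rcases le_or_gt 0 x with hx | hx
  · rw [if_pos hx, if_pos (by positivity)]
    rw [mul_rpow hc.le hx, mul_rpow hc.le hr.le,
      show -(r * (c * x)) = -(c * r * x) by ring]
    have hca : c ^ a = c * c ^ (a - 1) := by
      rw [show a = 1 + (a - 1) by ring, rpow_add hc, rpow_one]
      ring_nf
    rw [hca]
    ring
  · rw [if_neg (not_le.mpr hx), if_neg (not_le.mpr (by nlinarith))]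
    ring

lemma gamma_integral_scale (ha : 0 < a) (hr : 0 < r) {c : ℝ} (hc : 0 < c) (g : ℝ → ℝ) :
    ∫ x, g (c * x) ∂(gammaMeasure a (c * r)) = ∫ x, g x ∂(gammaMeasure a r) := by
  rw [gamma_bridge a r ha hr, gamma_bridge a (c * r) ha (by positivity)]
  have h1 : (fun x => gammaPDFReal a (c * r) x * g (c * x))
      = fun x => c * ((fun y => gammaPDFReal a r y * g y) (c * x)) := by
    funext x
    rw [gammaPDFReal_scale ha hr hc]
    ring
  have h2 := MeasureTheory.Measure.integral_comp_mul_left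
    (fun y => gammaPDFReal a r y * g y) c
  rw [h1, integral_const_mul, h2,
    abs_of_pos (inv_pos.mpr hc), smul_eq_mul, ← mul_assoc, mul_inv_cancel₀ hc.ne', one_mul]

lemma lipschitz_abs_sub {f : ℝ → ℝ} (hf : LipschitzWith 1 f) (x y : ℝ) :
    |f x - f y| ≤ |x - y| := by
  have h := hf.dist_le_mul x y
  simp only [Real.dist_eq, NNReal.coe_one, one_mul] at h
  exact h

lemma gamma_integrable_lipschitz (ha : 0 < a) (hr : 0 < r) {f : ℝ → ℝ}
    (hf : LipschitzWith 1 f) : Integrable f (gammaMeasure a r) := by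
  refine gamma_integrable_of_growth ha hr hf.continuous (C := |f 0|) (D := 1) (fun x => ?_)
  have h := lipschitz_abs_sub hf x 0
  simp only [sub_zero] at h
  calc |f x| = |f 0 + (f x - f 0)| := by rw [add_sub_cancel]
    _ ≤ |f 0| + |f x - f 0| := abs_add_le _ _
    _ ≤ |f 0| + |x| := by linarith
    _ = |f 0| + 1 * |x| := by ring

lemma gamma_rate_bound (ha : 0 < a) {α₁ α₂ : ℝ} (h1 : 0 < α₁) (h2 : 0 < α₂)
    {f : ℝ → ℝ} (hf : LipschitzWith 1 f) :
    |(∫ x, f x ∂gammaMeasure a α₁) - ∫ x, f x ∂gammaMeasure a α₂|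
      ≤ a * |1 / α₁ - 1 / α₂| := by
  set c := α₁ / α₂ with hcdef
  have hc : 0 < c := div_pos h1 h2
  have hca : c * α₂ = α₁ := by rw [hcdef]; field_simp
  have hscale : ∫ x, f (c * x) ∂(gammaMeasure a α₁) = ∫ x, f x ∂(gammaMeasure a α₂) := by
    rw [← hca]
    exact gamma_integral_scale ha h2 hc f
  have hint1 : Integrable f (gammaMeasure a α₁) := gamma_integrable_lipschitz ha h1 hf
  have hint2 : Integrable (fun x => f (c * x)) (gammaMeasure a α₁) := by
    refine gamma_integrable_of_growth ha h1 (hf.continuous.comp (continuous_mul_left c))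
      (C := |f 0|) (D := c) (fun x => ?_)
    have h := lipschitz_abs_sub hf (c * x) 0
    simp only [sub_zero] at h
    calc |f (c * x)| = |f 0 + (f (c * x) - f 0)| := by rw [add_sub_cancel]
      _ ≤ |f 0| + |f (c * x) - f 0| := abs_add_le _ _
      _ ≤ |f 0| + |c * x| := by linarith
      _ = |f 0| + c * |x| := by rw [abs_mul, abs_of_pos hc]
  have habs : Integrable (fun x => |1 - c| * |x|) (gammaMeasure a α₁) :=
    ((gamma_integrable_of_growth ha h1 continuous_abs (C := 0) (D := 1)
      (fun x => by simp)).const_mul _)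
  rw [← hscale, ← integral_sub hint1 hint2]
  calc |∫ x, (f x - f (c * x)) ∂gammaMeasure a α₁|
      ≤ ∫ x, |f x - f (c * x)| ∂gammaMeasure a α₁ := by
        simpa using norm_integral_le_integral_norm (μ := gammaMeasure a α₁)
          (f := fun x => f x - f (c * x))
    _ ≤ ∫ x, |1 - c| * |x| ∂gammaMeasure a α₁ := by
        refine integral_mono ((hint1.sub hint2).abs) habs (fun x => ?_)
        calc |f x - f (c * x)| ≤ |x - c * x| := lipschitz_abs_sub hf x (c * x)
          _ = |1 - c| * |x| := by rw [← abs_mul]; ring_nf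
    _ = |1 - c| * (a / α₁) := by rw [integral_const_mul, gamma_mean_abs ha h1]
    _ = a * |1 / α₁ - 1 / α₂| := by
        have e1 : 1 - c = (α₂ - α₁) / α₂ := by rw [hcdef]; field_simp
        have e2 : 1 / α₁ - 1 / α₂ = (α₂ - α₁) / (α₁ * α₂) := by field_simp
        rw [e1, e2, abs_div, abs_div, abs_of_pos h2, abs_of_pos (mul_pos h1 h2)]
        field_simp

/-- MLR property of gamma densities: for 0 < x < y the likelihood ratio is monotone. -/
lemma gamma_mlr {r₁ r₂ α : ℝ} (h1 : 0 < r₁) (h12 : r₁ ≤ r₂) (hα : 0 < α)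
    {x y : ℝ} (hx : x ≠ 0) (hy : y ≠ 0) (hxy : x < y) :
    gammaPDFReal r₂ α x * gammaPDFReal r₁ α y
      ≤ gammaPDFReal r₂ α y * gammaPDFReal r₁ α x := by
  have h2 : 0 < r₂ := lt_of_lt_of_le h1 h12
  rcases lt_or_gt_of_ne hx with hx0 | hx0
  · -- x < 0 : both sides vanish
    have px : gammaPDFReal r₁ α x = 0 := by rw [gammaPDFReal, if_neg (not_le.mpr hx0)]
    have qx : gammaPDFReal r₂ α x = 0 := by rw [gammaPDFReal, if_neg (not_le.mpr hx0)]
    rw [px, qx]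
    simp
  · rcases lt_or_gt_of_ne hy with hy0 | hy0
    · linarith
    · -- 0 < x < y
      have core : x ^ (r₂ - 1) * y ^ (r₁ - 1) ≤ y ^ (r₂ - 1) * x ^ (r₁ - 1) := by
        have e1 : x ^ (r₂ - 1) = x ^ (r₁ - 1) * x ^ (r₂ - r₁) := by
          rw [← rpow_add hx0]; ring_nf
        have e2 : y ^ (r₂ - 1) = y ^ (r₁ - 1) * y ^ (r₂ - r₁) := by
          rw [← rpow_add hy0]; ring_nf
        have hδ : x ^ (r₂ - r₁) ≤ y ^ (r₂ - r₁) :=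
          rpow_le_rpow hx0.le hxy.le (by linarith)
        have hpos : (0:ℝ) ≤ x ^ (r₁ - 1) * y ^ (r₁ - 1) := by positivity
        calc x ^ (r₂ - 1) * y ^ (r₁ - 1)
            = (x ^ (r₁ - 1) * y ^ (r₁ - 1)) * x ^ (r₂ - r₁) := by rw [e1]; ring
          _ ≤ (x ^ (r₁ - 1) * y ^ (r₁ - 1)) * y ^ (r₂ - r₁) :=
              mul_le_mul_of_nonneg_left hδ hpos
          _ = y ^ (r₂ - 1) * x ^ (r₁ - 1) := by rw [e2]; ring
      rw [gammaPDFReal, gammaPDFReal, gammaPDFReal, gammaPDFReal,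
        if_pos hx0.le, if_pos hy0.le, if_pos hx0.le, if_pos hy0.le]
      have hKE : (0:ℝ) ≤ (α ^ r₂ / Gamma r₂) * (α ^ r₁ / Gamma r₁)
          * (exp (-(α * x)) * exp (-(α * y))) := by positivity
      calc α ^ r₂ / Gamma r₂ * x ^ (r₂-1) * exp (-(α*x))
            * (α ^ r₁ / Gamma r₁ * y ^ (r₁-1) * exp (-(α*y)))
          = ((α ^ r₂ / Gamma r₂) * (α ^ r₁ / Gamma r₁) * (exp (-(α*x)) * exp (-(α*y))))
            * (x ^ (r₂-1) * y ^ (r₁-1)) := by ring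
        _ ≤ ((α ^ r₂ / Gamma r₂) * (α ^ r₁ / Gamma r₁) * (exp (-(α*x)) * exp (-(α*y))))
            * (y ^ (r₂-1) * x ^ (r₁-1)) := mul_le_mul_of_nonneg_left core hKE
        _ = α ^ r₂ / Gamma r₂ * y ^ (r₂-1) * exp (-(α*y))
            * (α ^ r₁ / Gamma r₁ * x ^ (r₁-1) * exp (-(α*x))) := by ring

lemma gamma_pdf_integral_one (ha : 0 < a) (hr : 0 < r) :
    ∫ x, gammaPDFReal a r x = 1 := by
  have hp : IsProbabilityMeasure (gammaMeasure a r) := isProbabilityMeasure_gammaMeasure ha hr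
  have h1 : ∫ x, (1:ℝ) ∂(gammaMeasure a r) = 1 := by simp
  rw [gamma_bridge a r ha hr] at h1
  simpa using h1

lemma gamma_shape_mono {α : ℝ} (hα : 0 < α) {r₁ r₂ : ℝ} (h1 : 0 < r₁) (h12 : r₁ ≤ r₂)
    {u : ℝ → ℝ} (hu : Monotone u)
    (hui1 : Integrable u (gammaMeasure r₁ α)) (hui2 : Integrable u (gammaMeasure r₂ α)) :
    ∫ x, u x ∂(gammaMeasure r₁ α) ≤ ∫ x, u x ∂(gammaMeasure r₂ α) := by
  have h2 : 0 < r₂ := lt_of_lt_of_le h1 h12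
  set p : ℝ → ℝ := gammaPDFReal r₁ α with hp
  set q : ℝ → ℝ := gammaPDFReal r₂ α with hq
  have ip : Integrable p := integrable_gammaPDFReal h1 hα
  have iq : Integrable q := integrable_gammaPDFReal h2 hα
  have ipu : Integrable (fun x => p x * u x) := (gamma_integrable_iff _ _ h1 hα u).mp hui1
  have iqu : Integrable (fun x => q x * u x) := (gamma_integrable_iff _ _ h2 hα u).mp hui2
  have hp1 : ∫ x, p x = 1 := gamma_pdf_integral_one h1 hα
  have hq1 : ∫ x, q x = 1 := gamma_pdf_integral_one h2 hα
  set A := ∫ x, q x * u x with hA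
  set B := ∫ x, p x * u x with hB
  set μ2 : Measure (ℝ × ℝ) := (volume : Measure ℝ).prod volume with hμ2
  -- the two cross terms
  have intF1 : Integrable (fun z : ℝ × ℝ => (q z.1 * u z.1) * p z.2) μ2 :=
    iqu.mul_prod ip
  have intF2 : Integrable (fun z : ℝ × ℝ => q z.1 * (p z.2 * u z.2)) μ2 := by
    have := iq.mul_prod ipu
    exact this
  have intG1 : Integrable (fun z : ℝ × ℝ => p z.1 * (q z.2 * u z.2)) μ2 :=
    ip.mul_prod iqu
  have intG2 : Integrable (fun z : ℝ × ℝ => (p z.1 * u z.1) * q z.2) μ2 :=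
    ipu.mul_prod iq
  have hF : ∫ z : ℝ × ℝ, ((q z.1 * u z.1) * p z.2 - q z.1 * (p z.2 * u z.2)) ∂μ2
      = A - B := by
    rw [integral_sub intF1 intF2]
    have e1 : ∫ z : ℝ × ℝ, (q z.1 * u z.1) * p z.2 ∂μ2 = A * 1 := by
      rw [integral_prod_mul (fun x => q x * u x) p, hp1, hA]
    have e2 : ∫ z : ℝ × ℝ, q z.1 * (p z.2 * u z.2) ∂μ2 = 1 * B := by
      rw [integral_prod_mul q (fun x => p x * u x), hq1, hB]
    rw [e1, e2]; ring
  have hG : ∫ z : ℝ × ℝ, (p z.1 * (q z.2 * u z.2) - (p z.1 * u z.1) * q z.2) ∂μ2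
      = A - B := by
    rw [integral_sub intG1 intG2]
    have e1 : ∫ z : ℝ × ℝ, p z.1 * (q z.2 * u z.2) ∂μ2 = 1 * A := by
      rw [integral_prod_mul p (fun x => q x * u x), hp1, hA]
    have e2 : ∫ z : ℝ × ℝ, (p z.1 * u z.1) * q z.2 ∂μ2 = B * 1 := by
      rw [integral_prod_mul (fun x => p x * u x) q, hq1, hB]
    rw [e1, e2]; ring
  -- a.e. nonnegativity of the symmetrized integrand
  have hae : ∀ᵐ z ∂μ2, z.1 ≠ 0 ∧ z.2 ≠ 0 := by
    have h0a : μ2 (({0} : Set ℝ) ×ˢ (univ : Set ℝ)) = 0 := by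
      rw [hμ2, Measure.prod_prod]; simp
    have h0b : μ2 ((univ : Set ℝ) ×ˢ ({0} : Set ℝ)) = 0 := by
      rw [hμ2, Measure.prod_prod]; simp
    have hsub : {z : ℝ × ℝ | ¬(z.1 ≠ 0 ∧ z.2 ≠ 0)}
        ⊆ (({0} : Set ℝ) ×ˢ (univ : Set ℝ)) ∪ ((univ : Set ℝ) ×ˢ ({0} : Set ℝ)) := by
      intro z hz
      simp only [mem_setOf_eq, not_and_or, not_not] at hz
      rcases hz with h | h
      · exact Or.inl (Set.mem_prod.mpr ⟨by simp [h], trivial⟩)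
      · exact Or.inr (Set.mem_prod.mpr ⟨trivial, by simp [h]⟩)
    rw [ae_iff]
    exact measure_mono_null hsub (measure_union_null h0a h0b)
  have hnonneg : 0 ≤ ∫ z : ℝ × ℝ,
      (((q z.1 * u z.1) * p z.2 - q z.1 * (p z.2 * u z.2))
        + (p z.1 * (q z.2 * u z.2) - (p z.1 * u z.1) * q z.2)) ∂μ2 := by
    refine integral_nonneg_of_ae ?_
    filter_upwards [hae] with z hz
    obtain ⟨hx, hy⟩ := hz
    have key : ((q z.1 * u z.1) * p z.2 - q z.1 * (p z.2 * u z.2))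
        + (p z.1 * (q z.2 * u z.2) - (p z.1 * u z.1) * q z.2)
        = (u z.1 - u z.2) * (q z.1 * p z.2 - q z.2 * p z.1) := by ring
    rw [key]
    rcases lt_trichotomy z.1 z.2 with h | h | h
    · have hu' : u z.1 - u z.2 ≤ 0 := sub_nonpos.mpr (hu h.le)
      have hq' : q z.1 * p z.2 - q z.2 * p z.1 ≤ 0 :=
        sub_nonpos.mpr (gamma_mlr h1 h12 hα hx hy h)
      have := mul_nonneg (neg_nonneg.mpr hu') (neg_nonneg.mpr hq')
      rw [neg_mul_neg] at this
      exact this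
    · rw [h]; simp
    · have hu' : 0 ≤ u z.1 - u z.2 := sub_nonneg.mpr (hu h.le)
      have hq' : 0 ≤ q z.1 * p z.2 - q z.2 * p z.1 := by
        have := gamma_mlr h1 h12 hα hy hx h
        linarith
      exact mul_nonneg hu' hq'
  have intF : Integrable (fun z : ℝ × ℝ =>
      q z.1 * u z.1 * p z.2 - q z.1 * (p z.2 * u z.2)) μ2 := by exact intF1.sub intF2
  have intG : Integrable (fun z : ℝ × ℝ =>
      p z.1 * (q z.2 * u z.2) - p z.1 * u z.1 * q z.2) μ2 := by exact intG1.sub intG2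
  rw [integral_add intF intG, hF, hG] at hnonneg
  have hAB : B ≤ A := by linarith
  have e1 : ∫ x, u x ∂(gammaMeasure r₁ α) = B := by
    rw [gamma_bridge _ _ h1 hα]
  have e2 : ∫ x, u x ∂(gammaMeasure r₂ α) = A := by
    rw [gamma_bridge _ _ h2 hα]
  rw [e1, e2]
  exact hAB

lemma gamma_shape_bound_le {α : ℝ} (hα : 0 < α) {r₁ r₂ : ℝ} (h1 : 0 < r₁) (h12 : r₁ ≤ r₂)
    {f : ℝ → ℝ} (hf : LipschitzWith 1 f) :
    |(∫ x, f x ∂gammaMeasure r₁ α) - ∫ x, f x ∂gammaMeasure r₂ α| ≤ (r₂ - r₁) / α := by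
  have h2 : 0 < r₂ := lt_of_lt_of_le h1 h12
  set u : ℝ → ℝ := fun x => (x + f x) / 2 with hudef
  set v : ℝ → ℝ := fun x => (x - f x) / 2 with hvdef
  have hu : Monotone u := by
    intro x y hxy
    have h := lipschitz_abs_sub hf y x
    rw [abs_le] at h
    have : |y - x| = y - x := abs_of_nonneg (by linarith)
    rw [this] at h
    simp only [hudef]
    have : x + f x ≤ y + f y := by linarith [h.1]
    linarith
  have hv : Monotone v := by
    intro x y hxy
    have h := lipschitz_abs_sub hf y x
    rw [abs_le] at h
    have : |y - x| = y - x := abs_of_nonneg (by linarith)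
    rw [this] at h
    simp only [hvdef]
    have : x - f x ≤ y - f y := by linarith [h.2]
    linarith
  have hiu : ∀ {a : ℝ}, 0 < a → Integrable u (gammaMeasure a α) := fun ha =>
    ((gamma_integrable_id ha hα).add (gamma_integrable_lipschitz ha hα hf)).div_const 2
  have hiv : ∀ {a : ℝ}, 0 < a → Integrable v (gammaMeasure a α) := fun ha =>
    ((gamma_integrable_id ha hα).sub (gamma_integrable_lipschitz ha hα hf)).div_const 2
  have hDu := gamma_shape_mono hα h1 h12 hu (hiu h1) (hiu h2)
  have hDv := gamma_shape_mono hα h1 h12 hv (hiv h1) (hiv h2)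
  have hsum : ∀ {a : ℝ}, 0 < a →
      (∫ x, u x ∂gammaMeasure a α) + ∫ x, v x ∂gammaMeasure a α = a / α := by
    intro a ha
    rw [← integral_add (hiu ha) (hiv ha)]
    have : (fun x => u x + v x) = fun x : ℝ => x := by
      funext x; simp only [hudef, hvdef]; ring
    rw [this, gamma_mean ha hα]
  have hfuv : ∀ {a : ℝ}, 0 < a →
      ∫ x, f x ∂gammaMeasure a α
        = (∫ x, u x ∂gammaMeasure a α) - ∫ x, v x ∂gammaMeasure a α := by
    intro a ha
    rw [← integral_sub (hiu ha) (hiv ha)]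
    congr 1
    funext x
    simp only [hudef, hvdef]
    ring
  rw [hfuv h1, hfuv h2]
  have hs1 := hsum h1
  have hs2 := hsum h2
  have hkey : (r₂ - r₁) / α = r₂ / α - r₁ / α := by rw [sub_div]
  rw [abs_le]
  constructor <;> [skip; skip] <;> linarith

lemma gamma_shape_bound {α : ℝ} (hα : 0 < α) {r₁ r₂ : ℝ} (h1 : 0 < r₁) (h2 : 0 < r₂)
    {f : ℝ → ℝ} (hf : LipschitzWith 1 f) :
    |(∫ x, f x ∂gammaMeasure r₁ α) - ∫ x, f x ∂gammaMeasure r₂ α| ≤ |r₁ - r₂| / α := by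
  rcases le_total r₁ r₂ with h | h
  · rw [show |r₁ - r₂| = r₂ - r₁ by rw [abs_sub_comm]; exact abs_of_nonneg (by linarith)]
    exact gamma_shape_bound_le hα h1 h hf
  · rw [abs_sub_comm, show |r₁ - r₂| = r₁ - r₂ from abs_of_nonneg (by linarith)]
    exact gamma_shape_bound_le hα h2 h hf

/-- Wasserstein distance bound between two gamma distributions. -/
theorem wasserstein_gamma_gamma_le (r₁ r₂ α₁ α₂ : ℝ)
    (hr₁ : 0 < r₁) (hr₂ : 0 < r₂) (hα₁ : 0 < α₁) (hα₂ : 0 < α₂) :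
    ∀ f : ℝ → ℝ, LipschitzWith 1 f →
      |(∫ x, f x ∂gammaMeasure r₁ α₁) - ∫ x, f x ∂gammaMeasure r₂ α₂|
        ≤ |r₁ - r₂| / max α₁ α₂ + max r₁ r₂ * |1 / α₁ - 1 / α₂| := by
  intro f hf
  have habs : (0:ℝ) ≤ |1 / α₁ - 1 / α₂| := abs_nonneg _
  rcases le_total α₁ α₂ with hα | hα
  · have t1 : |(∫ x, f x ∂gammaMeasure r₁ α₁) - ∫ x, f x ∂gammaMeasure r₁ α₂|
        ≤ r₁ * |1 / α₁ - 1 / α₂| := gamma_rate_bound hr₁ hα₁ hα₂ hf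
    have t2 : |(∫ x, f x ∂gammaMeasure r₁ α₂) - ∫ x, f x ∂gammaMeasure r₂ α₂|
        ≤ |r₁ - r₂| / α₂ := gamma_shape_bound hα₂ hr₁ hr₂ hf
    have tri := abs_sub_le (∫ x, f x ∂gammaMeasure r₁ α₁)
      (∫ x, f x ∂gammaMeasure r₁ α₂) (∫ x, f x ∂gammaMeasure r₂ α₂)
    have hmr : r₁ * |1 / α₁ - 1 / α₂| ≤ max r₁ r₂ * |1 / α₁ - 1 / α₂| :=
      mul_le_mul_of_nonneg_right (le_max_left _ _) habs
    rw [max_eq_right hα]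
    linarith
  · have t1 : |(∫ x, f x ∂gammaMeasure r₁ α₁) - ∫ x, f x ∂gammaMeasure r₂ α₁|
        ≤ |r₁ - r₂| / α₁ := gamma_shape_bound hα₁ hr₁ hr₂ hf
    have t2 : |(∫ x, f x ∂gammaMeasure r₂ α₁) - ∫ x, f x ∂gammaMeasure r₂ α₂|
        ≤ r₂ * |1 / α₁ - 1 / α₂| := gamma_rate_bound hr₂ hα₁ hα₂ hf
    have tri := abs_sub_le (∫ x, f x ∂gammaMeasure r₁ α₁)
      (∫ x, f x ∂gammaMeasure r₂ α₁) (∫ x, f x ∂gammaMeasure r₂ α₂)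
    have hmr : r₂ * |1 / α₁ - 1 / α₂| ≤ max r₁ r₂ * |1 / α₁ - 1 / α₂| :=
      mul_le_mul_of_nonneg_right (le_max_right _ _) habs
    rw [max_eq_left hα]
    linarith
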